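/- Let A be a deterministic parity automaton over Σ with state set Q, initial state q₀, transition function δ, and coloring c. Then L(A) is DBW-recognizable if and only if for every strongly connected set C of A that is reachable from q₀ and accepting (i.e., max{c(q) : q ∈ C} is odd), and for every strongly connected set C' of A with C ⊆ C', the set C' is accepting. -/

import Mathlib

structure DetAuto (α : Type) where
  Q : Type
  [fin : Fintype Q]
  init : Q
  δ : Q → α → Q

attribute [instance] DetAuto.fin

/-- The run of a deterministic automaton on an infinite word. -/
def DetAuto.run {α : Type} (M : DetAuto α) (x : ℕ → α) : ℕ → M.Q
  | 0 => M.init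
  | n + 1 => M.δ (M.run x n) (x n)

/-- Parity acceptance: the maximal color occurring infinitely often in the run is odd. -/
def ParityAccept {α : Type} (M : DetAuto α) (c : M.Q → ℕ) (x : ℕ → α) : Prop :=
  ∃ m, Odd m ∧ (∃ᶠ n in Filter.atTop, c (M.run x n) = m) ∧
    ∀ m', (∃ᶠ n in Filter.atTop, c (M.run x n) = m') → m' ≤ m

/-- A language is ω-regular iff it is recognized by some deterministic parity automaton. -/
def OmegaRegular {α : Type} (L : Set (ℕ → α)) : Prop :=
  ∃ (M : DetAuto α) (c : M.Q → ℕ), ∀ x, x ∈ L ↔ ParityAccept M c x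

/-- A language is DBW-recognizable iff some deterministic Büchi automaton recognizes it. -/
def DBWRecognizable {α : Type} (L : Set (ℕ → α)) : Prop :=
  ∃ (M : DetAuto α) (acc : Set M.Q), ∀ x, x ∈ L ↔ ∃ᶠ n in Filter.atTop, M.run x n ∈ acc

/-- The extension δ* of the transition function to finite words. -/
def DetAuto.runOn {α : Type} (M : DetAuto α) (q : M.Q) (u : List α) : M.Q :=
  u.foldl M.δ q

/-- `C` is a strongly connected set: it is nonempty and between any two of its states
there is a nonempty path staying inside `C`. -/
def IsSCS {α : Type} (M : DetAuto α) (C : Set M.Q) : Prop :=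
  C.Nonempty ∧ ∀ q ∈ C, ∀ q' ∈ C, ∃ u : List α, u ≠ [] ∧ M.runOn q u = q' ∧
    ∀ p : List α, p <+: u → M.runOn q p ∈ C

/-- The SCS `C` is accepting: the maximal color in `C` is odd. -/
def AcceptingSCS {α : Type} (M : DetAuto α) (c : M.Q → ℕ) (C : Set M.Q) : Prop :=
  ∃ q ∈ C, Odd (c q) ∧ ∀ q' ∈ C, c q' ≤ c q

open Filter

namespace DetAuto
variable {α : Type} (M : DetAuto α)

theorem runOn_append (q : M.Q) (u v : List α) :
    M.runOn q (u ++ v) = M.runOn (M.runOn q u) v :=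
  List.foldl_append ..

theorem runOn_concat (q : M.Q) (u : List α) (a : α) :
    M.runOn q (u ++ [a]) = M.δ (M.runOn q u) a :=
  runOn_append ..

/-- the segment x(n) x(n+1) ... x(n+m-1) -/
def seg (x : ℕ → α) (n m : ℕ) : List α := List.ofFn fun i : Fin m => x (n + i)

@[simp] theorem seg_zero (x : ℕ → α) (n : ℕ) : seg x n 0 = [] := rfl

@[simp] theorem seg_length (x : ℕ → α) (n m : ℕ) : (seg x n m).length = m := by
  simp [seg]

theorem seg_succ (x : ℕ → α) (n m : ℕ) :
    seg x n (m + 1) = seg x n m ++ [x (n + m)] := by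
  rw [seg, List.ofFn_succ', List.concat_eq_append]
  rfl

theorem run_add (x : ℕ → α) (n m : ℕ) :
    M.run x (n + m) = M.runOn (M.run x n) (seg x n m) := by
  induction m with
  | zero => simp [runOn]
  | succ m ih => rw [seg_succ, runOn_append, ← ih]; simp [run, runOn]

theorem run_eq_runOn (x : ℕ → α) (n : ℕ) :
    M.run x n = M.runOn M.init (seg x 0 n) := by
  have := M.run_add x 0 n
  simpa [run] using this

end DetAuto

/-- pigeonhole for frequently -/
theorem freq_pigeon {Q : Type} [Fintype Q] (f : ℕ → Q) (p : Q → Prop)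
    (h : ∃ᶠ n in atTop, p (f n)) : ∃ q, p q ∧ ∃ᶠ n in atTop, f n = q := by
  by_contra hc
  push_neg at hc
  have : ∀ᶠ n in atTop, ∀ q : Q, p q → f n ≠ q := by
    rw [eventually_all]
    intro q
    by_cases hq : p q
    · have := hc q hq
      filter_upwards [this] with n hn _
      exact hn
    · filter_upwards with n hn; exact absurd hn hq
  rw [frequently_iff_forall_eventually_exists_and] at h
  obtain ⟨n, hpn, hn⟩ := h this
  exact hn (f n) hpn rfl

namespace DetAuto
variable {α : Type} (M : DetAuto α)

/-- set of states visited infinitely often -/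
def infSet (x : ℕ → α) : Set M.Q := {q | ∃ᶠ n in atTop, M.run x n = q}

theorem infSet_nonempty (x : ℕ → α) : (M.infSet x).Nonempty := by
  obtain ⟨q, _, hq⟩ := freq_pigeon (M.run x) (fun _ => True) (by
    simp only [frequently_true_iff_neBot]; infer_instance)
  exact ⟨q, hq⟩

theorem eventually_mem_infSet (x : ℕ → α) :
    ∀ᶠ n in atTop, M.run x n ∈ M.infSet x := by
  have : ∀ᶠ n in atTop, ∀ q : M.Q, q ∉ M.infSet x → M.run x n ≠ q := by
    rw [eventually_all]
    intro q
    by_cases hq : q ∈ M.infSet x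
    · filter_upwards with n hn; exact absurd hq hn
    · rw [infSet, Set.mem_setOf_eq, not_frequently] at hq
      filter_upwards [hq] with n hn _
      exact hn
  filter_upwards [this] with n hn
  by_contra hm
  exact hn _ hm rfl

theorem isSCS_infSet (x : ℕ → α) : IsSCS M (M.infSet x) := by
  refine ⟨M.infSet_nonempty x, ?_⟩
  intro q hq q' hq'
  obtain ⟨N, hN⟩ := eventually_atTop.mp (M.eventually_mem_infSet x)
  obtain ⟨n, hnN, hn⟩ := (frequently_atTop.mp hq) N
  obtain ⟨n', hn'N, hn'⟩ := (frequently_atTop.mp hq') (n+1)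
  refine ⟨seg x n (n' - n), ?_, ?_, ?_⟩
  · intro h
    have := congrArg List.length h
    simp at this
    omega
  · rw [← hn, ← M.run_add, ← hn']
    congr 1; omega
  · intro p hp
    have hlen : p.length ≤ n' - n := by
      have := hp.length_le; simpa using this
    have hpseg : p = seg x n p.length := by
      obtain ⟨t, ht⟩ := hp
      have : p = (seg x n (n'-n)).take p.length := by
        rw [← ht]; simp
      rw [this]
      apply List.ext_getElem
      · simp [hlen]
      · intro i h1 h2
        simp [seg, hlen]
    rw [hpseg, ← hn, ← M.run_add]
    exact hN _ (by omega)

theorem infSet_reachable (x : ℕ → α) : ∃ v : List α, M.runOn M.init v ∈ M.infSet x := by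
  obtain ⟨q, hq⟩ := M.infSet_nonempty x
  obtain ⟨n, _, hn⟩ := (frequently_atTop.mp hq) 0
  exact ⟨seg x 0 n, by rw [← M.run_eq_runOn]; exact hn ▸ hq⟩

end DetAuto

section Union
variable {α : Type} (M : DetAuto α)

theorem prefix_append_cases {p u w : List α} (h : p <+: u ++ w) :
    p <+: u ∨ ∃ p', p' <+: w ∧ p = u ++ p' := by
  rcases le_or_gt p.length u.length with hle | hlt
  · exact Or.inl (List.prefix_of_prefix_length_le h (u.prefix_append w) hle)
  · right
    have hu : u <+: p :=
      List.prefix_of_prefix_length_le (u.prefix_append w) h (by omega)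
    obtain ⟨p', rfl⟩ := hu
    refine ⟨p', ?_, rfl⟩
    obtain ⟨t, ht⟩ := h
    rw [List.append_assoc] at ht
    exact ⟨t, by simpa using (List.append_cancel_left ht)⟩

theorem scs_union {C D : Set M.Q} (hC : IsSCS M C) (hD : IsSCS M D)
    {s : M.Q} (hsC : s ∈ C) (hsD : s ∈ D) : IsSCS M (C ∪ D) := by
  have key : ∀ (A B : Set M.Q), IsSCS M A → IsSCS M B →
      ∀ q ∈ A, ∀ q' ∈ B, s ∈ A → s ∈ B →
      ∃ u : List α, u ≠ [] ∧ M.runOn q u = q' ∧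
        ∀ p : List α, p <+: u → M.runOn q p ∈ A ∪ B := by
    intro A B hA hB q hq q' hq' hsA hsB
    obtain ⟨u, hu0, hu1, hu2⟩ := hA.2 q hq s hsA
    obtain ⟨w, hw0, hw1, hw2⟩ := hB.2 s hsB q' hq'
    refine ⟨u ++ w, by simp [hu0], by rw [M.runOn_append, hu1, hw1], ?_⟩
    intro p hp
    rcases prefix_append_cases hp with h | ⟨p', hp', rfl⟩
    · exact Or.inl (hu2 p h)
    · rw [M.runOn_append, hu1]
      exact Or.inr (hw2 p' hp')
  refine ⟨hC.1.mono Set.subset_union_left, ?_⟩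
  rintro q (hq | hq) q' (hq' | hq')
  · exact key C C hC hC q hq q' hq' hsC hsC |>.imp
      fun u ⟨h0, h1, h2⟩ => ⟨h0, h1, fun p hp => by
        rcases h2 p hp with h | h
        exacts [Or.inl h, Or.inl h]⟩
  · exact key C D hC hD q hq q' hq' hsC hsD
  · obtain ⟨u, h0, h1, h2⟩ := key D C hD hC q hq q' hq' hsD hsC
    exact ⟨u, h0, h1, fun p hp => (h2 p hp).symm⟩
  · obtain ⟨u, h0, h1, h2⟩ := key D D hD hD q hq q' hq' hsD hsD
    exact ⟨u, h0, h1, fun p hp => by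
      rcases h2 p hp with h | h
      exacts [Or.inr h, Or.inr h]⟩

end Union

section Dir2
variable {Sig : Type} [Fintype Sig] (M : DetAuto Sig) (c : M.Q → ℕ)

theorem freq_color_mem_infSet {x : ℕ → Sig} {m : ℕ}
    (h : ∃ᶠ n in atTop, c (M.run x n) = m) :
    ∃ q ∈ M.infSet x, c q = m := by
  obtain ⟨q, hq1, hq2⟩ := freq_pigeon (M.run x) (fun q => c q = m) h
  exact ⟨q, hq2, hq1⟩

theorem mem_infSet_freq_color {x : ℕ → Sig} {q : M.Q} (hq : q ∈ M.infSet x) :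
    ∃ᶠ n in atTop, c (M.run x n) = c q :=
  hq.mono fun n hn => by rw [hn]

theorem infSet_accepting {x : ℕ → Sig} (h : ParityAccept M c x) :
    AcceptingSCS M c (M.infSet x) := by
  obtain ⟨m, hodd, hfreq, hmax⟩ := h
  obtain ⟨q, hq, hcq⟩ := freq_color_mem_infSet M c hfreq
  refine ⟨q, hq, hcq ▸ hodd, ?_⟩
  intro q' hq'
  rw [hcq]
  exact hmax _ (mem_infSet_freq_color M c hq')

theorem accepting_of_infSet_F {x : ℕ → Sig}
    (hacc : AcceptingSCS M c (M.infSet x)) : ParityAccept M c x := by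
  obtain ⟨q, hq, hodd, hmax⟩ := hacc
  refine ⟨c q, hodd, mem_infSet_freq_color M c hq, ?_⟩
  intro m' hm'
  obtain ⟨q', hq', hcq'⟩ := freq_color_mem_infSet M c hm'
  exact hcq' ▸ hmax q' hq'

/-- the Büchi acceptance set -/
def Fset : Set M.Q :=
  {q | ∀ D : Set M.Q, IsSCS M D → (∃ v : List Sig, M.runOn M.init v ∈ D) →
        q ∈ D → AcceptingSCS M c D}

theorem dir2 (L : Set (ℕ → Sig)) (hL : ∀ x, x ∈ L ↔ ParityAccept M c x)
    (H : ∀ C : Set M.Q, IsSCS M C → (∃ v : List Sig, M.runOn M.init v ∈ C) →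
        AcceptingSCS M c C →
        ∀ C' : Set M.Q, IsSCS M C' → C ⊆ C' → AcceptingSCS M c C') :
    DBWRecognizable L := by
  refine ⟨M, Fset M c, fun x => ?_⟩
  rw [hL x]
  constructor
  · intro hx
    have hinf := infSet_accepting M c hx
    obtain ⟨q, hq, hodd, hmax⟩ := hinf
    -- q is in Fset
    have hqF : q ∈ Fset M c := by
      intro D hD hDreach hqD
      have hUn : IsSCS M (D ∪ M.infSet x) := scs_union M hD (M.isSCS_infSet x) hqD hq
      have hU : AcceptingSCS M c (D ∪ M.infSet x) :=
        H (M.infSet x) (M.isSCS_infSet x) (M.infSet_reachable x)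
          ⟨q, hq, hodd, hmax⟩ (D ∪ M.infSet x) hUn Set.subset_union_right
      obtain ⟨q1, hq1, hodd1, hmax1⟩ := hU
      rcases hq1 with hq1 | hq1
      · exact ⟨q1, hq1, hodd1, fun q' hq' => hmax1 q' (Or.inl hq')⟩
      · have he : c q1 = c q := le_antisymm (hmax q1 hq1) (hmax1 q (Or.inr hq))
        exact ⟨q, hqD, hodd, fun q' hq' => he ▸ hmax1 q' (Or.inl hq')⟩
    exact hq.mono fun n hn => hn ▸ hqF
  · intro hx
    obtain ⟨q, hqF, hqfreq⟩ := freq_pigeon (M.run x) (· ∈ Fset M c) hx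
    have hinf : AcceptingSCS M c (M.infSet x) :=
      hqF (M.infSet x) (M.isSCS_infSet x) (M.infSet_reachable x) hqfreq
    exact accepting_of_infSet_F M c hinf

end Dir2

section Loop
variable {α : Type} (M : DetAuto α)

/-- the word base · ℓ^ω -/
noncomputable def loopWord (base ℓ : List α) (h : ℓ ≠ []) : ℕ → α :=
  fun n => if hn : n < base.length then base[n]
    else ℓ[(n - base.length) % ℓ.length]'(Nat.mod_lt _ (List.length_pos_iff.mpr h))

theorem loopWord_base {base ℓ : List α} (h : ℓ ≠ []) {i : ℕ} (hi : i < base.length) :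
    loopWord base ℓ h i = base[i] := dif_pos hi

theorem loopWord_loop {base ℓ : List α} (h : ℓ ≠ []) (i : ℕ) :
    loopWord base ℓ h (base.length + i) =
      ℓ[i % ℓ.length]'(Nat.mod_lt _ (List.length_pos_iff.mpr h)) := by
  rw [loopWord, dif_neg (by omega)]
  congr 2
  omega

theorem seg_eq_take {x : ℕ → α} {L : List α} {m : ℕ} (hm : m ≤ L.length)
    (hx : ∀ i, (h : i < m) → x i = L[i]'(lt_of_lt_of_le h hm)) :
    DetAuto.seg x 0 m = L.take m := by
  apply List.ext_getElem
  · simp [hm]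
  · intro i h1 h2
    simp only [DetAuto.seg, List.getElem_ofFn, List.getElem_take]
    simpa using hx i (by simpa using h1)

theorem seg_loopWord_base {base ℓ : List α} (h : ℓ ≠ []) {m : ℕ} (hm : m ≤ base.length) :
    DetAuto.seg (loopWord base ℓ h) 0 m = base.take m :=
  seg_eq_take hm fun i hi => loopWord_base h (lt_of_lt_of_le hi hm)

theorem run_loopWord_base {base ℓ : List α} (h : ℓ ≠ []) :
    M.run (loopWord base ℓ h) base.length = M.runOn M.init base := by
  rw [M.run_eq_runOn, seg_loopWord_base h le_rfl, List.take_length]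

theorem run_loopWord {base ℓ : List α} (h : ℓ ≠ [])
    (hloop : M.runOn (M.runOn M.init base) ℓ = M.runOn M.init base) (t : ℕ) :
    M.run (loopWord base ℓ h) (base.length + t) =
      M.runOn (M.runOn M.init base) (ℓ.take (t % ℓ.length)) := by
  have hL : 0 < ℓ.length := List.length_pos_iff.mpr h
  induction t with
  | zero => simp [run_loopWord_base, DetAuto.runOn]
  | succ t ih =>
    have step : M.run (loopWord base ℓ h) (base.length + t + 1) =
        M.δ (M.run (loopWord base ℓ h) (base.length + t)) (loopWord base ℓ h (base.length + t)) :=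
      rfl
    rw [show base.length + (t+1) = base.length + t + 1 by omega, step, ih, loopWord_loop h]
    have htake : ∀ m, (hm : m < ℓ.length) →
        M.δ (M.runOn (M.runOn M.init base) (ℓ.take m)) ℓ[m] =
          M.runOn (M.runOn M.init base) (ℓ.take (m+1)) := by
      intro m hm
      rw [← List.take_concat_get' ℓ m hm, M.runOn_append]
      rfl
    have hd := Nat.div_add_mod t ℓ.length
    rcases Nat.lt_or_ge (t % ℓ.length + 1) ℓ.length with hc | hc
    · rw [htake _ (Nat.mod_lt _ hL)]
      have he : (t+1) % ℓ.length = t % ℓ.length + 1 := by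
        have h3 : t + 1 = ℓ.length * (t / ℓ.length) + (t % ℓ.length + 1) := by omega
        rw [h3, Nat.mul_add_mod]
        exact Nat.mod_eq_of_lt hc
      rw [he]
    · have h1 : t % ℓ.length + 1 = ℓ.length := by
        have := Nat.mod_lt t hL; omega
      have h2 : (t + 1) % ℓ.length = 0 := by
        have h3 : t + 1 = ℓ.length * (t / ℓ.length + 1) := by
          rw [Nat.mul_add, Nat.mul_one]; omega
        rw [h3, Nat.mul_mod_right]
      rw [htake _ (Nat.mod_lt _ hL), h1, List.take_length, hloop, h2]
      simp [DetAuto.runOn]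

end Loop

section Step
variable {Sig : Type} (M : DetAuto Sig)

theorem seg_take {x : ℕ → Sig} {j n : ℕ} (hj : j ≤ n) :
    (DetAuto.seg x 0 n).take j = DetAuto.seg x 0 j := by
  apply List.ext_getElem
  · simp [hj]
  · intro i h1 h2
    simp [DetAuto.seg]

theorem seg_prefix {x : ℕ → Sig} {m n : ℕ} (hm : m ≤ n) :
    DetAuto.seg x 0 m <+: DetAuto.seg x 0 n := by
  rw [← seg_take hm]; exact List.take_prefix ..

theorem step_lemma (c : M.Q → ℕ) (N : DetAuto Sig) (acc : Set N.Q)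
    {C : Set M.Q} (hC : IsSCS M C) (hCacc : AcceptingSCS M c C)
    (hx : ∀ x : ℕ → Sig, ParityAccept M c x → ∃ᶠ n in atTop, N.run x n ∈ acc)
    (base : List Sig) (hbase : M.runOn M.init base ∈ C) (b : ℕ) :
    ∃ g : List Sig, base <+: g ∧ b < g.length ∧ M.runOn M.init g ∈ C ∧
      (∀ p, base <+: p → p <+: g → M.runOn M.init p ∈ C) ∧
      N.runOn N.init g ∈ acc := by
  obtain ⟨qc, hqcC, hodd, hmax⟩ := hCacc
  set s := M.runOn M.init base with hs
  obtain ⟨u, hu0, hu1, hu2⟩ := hC.2 s hbase qc hqcC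
  obtain ⟨ℓ, hℓ0, hℓ1, hℓ2⟩ := hC.2 qc hqcC qc hqcC
  have hL : 0 < ℓ.length := List.length_pos_iff.mpr hℓ0
  set base' := base ++ u with hbase'
  set y := loopWord base' ℓ hℓ0 with hy
  have hr : M.runOn M.init base' = qc := by
    rw [hbase', M.runOn_append, ← hs, hu1]
  have hloop : M.runOn (M.runOn M.init base') ℓ = M.runOn M.init base' := by
    rw [hr, hℓ1]
  have hper : ∀ t, M.run y (base'.length + t) = M.runOn qc (ℓ.take (t % ℓ.length)) := by
    intro t
    rw [hy, run_loopWord M hℓ0 hloop, hr]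
  have hA : ∀ t, M.run y (base'.length + t) ∈ C := by
    intro t
    rw [hper]
    exact hℓ2 _ (List.take_prefix ..)
  -- y satisfies the parity condition
  have hyL : ParityAccept M c y := by
    refine ⟨c qc, hodd, ?_, ?_⟩
    · rw [frequently_atTop]
      intro a
      refine ⟨base'.length + ℓ.length * a, by nlinarith, ?_⟩
      rw [hper, Nat.mul_mod_right]
      simp [DetAuto.runOn]
    · intro m' hm'
      obtain ⟨n, hn1, hn2⟩ := frequently_atTop.mp hm' base'.length
      obtain ⟨t, rfl⟩ := Nat.exists_eq_add_of_le hn1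
      rw [← hn2]
      exact hmax _ (hA t)
  -- get an accepting position beyond b and base'
  obtain ⟨n, hn1, hn2⟩ := frequently_atTop.mp (hx y hyL) (max (b+1) base'.length)
  rw [max_le_iff] at hn1
  have hbl : base.length ≤ base'.length := by simp [hbase']
  refine ⟨DetAuto.seg y 0 n, ?_, ?_, ?_, ?_, ?_⟩
  · have h1 : DetAuto.seg y 0 base.length = base := by
      rw [hy, seg_loopWord_base hℓ0 (by simp [hbase'])]
      simp [hbase']
    rw [← h1]
    exact seg_prefix (by omega)
  · simp only [DetAuto.seg_length]; omega
  · have : n = base'.length + (n - base'.length) := by omega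
    rw [← M.run_eq_runOn, this]
    exact hA _
  · intro p hp1 hp2
    have hple : p.length ≤ n := by simpa using hp2.length_le
    have hpb : base.length ≤ p.length := by simpa using hp1.length_le
    have hpeq : p = DetAuto.seg y 0 p.length := by
      conv_lhs => rw [List.prefix_iff_eq_take.mp hp2]
      rw [seg_take hple]
    rw [hpeq, ← M.run_eq_runOn]
    rcases Nat.lt_or_ge p.length base'.length with hc | hc
    · have h1 : p.length = base.length + (p.length - base.length) := by omega
      have h2 : M.run y p.length = M.runOn s (u.take (p.length - base.length)) := by
        rw [M.run_eq_runOn, hy, seg_loopWord_base hℓ0 (by omega), hbase',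
          List.take_append, List.take_of_length_le (by omega),
          M.runOn_append, ← hs]
      rw [h2]
      exact hu2 _ (List.take_prefix ..)
    · have h1 : p.length = base'.length + (p.length - base'.length) := by omega
      rw [h1]
      exact hA _
  · rw [← N.run_eq_runOn]
    exact hn2

end Step

section Dir1
variable {Sig : Type} [Fintype Sig] (M : DetAuto Sig)

theorem dir1 (c : M.Q → ℕ) (L : Set (ℕ → Sig)) (hL : ∀ x, x ∈ L ↔ ParityAccept M c x)
    (hDBW : DBWRecognizable L) :
    ∀ C : Set M.Q, IsSCS M C → (∃ v : List Sig, M.runOn M.init v ∈ C) →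
        AcceptingSCS M c C →
        ∀ C' : Set M.Q, IsSCS M C' → C ⊆ C' → AcceptingSCS M c C' := by
  obtain ⟨N, acc, hN⟩ := hDBW
  intro C hC hCreach hCacc C' hC' hsub
  by_contra hnot
  obtain ⟨q', hq'C', hq'max⟩ := Set.exists_max_image C' c (Set.toFinite C') hC'.1
  have heven : ¬ Odd (c q') := fun h => hnot ⟨q', hq'C', h, hq'max⟩
  have hx : ∀ x : ℕ → Sig, ParityAccept M c x → ∃ᶠ n in atTop, N.run x n ∈ acc :=
    fun x hp => (hN x).mp ((hL x).mpr hp)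
  -- a default letter
  obtain ⟨qC0, hqC0⟩ := hC.1
  obtain ⟨u0, hu00, -, -⟩ := hC.2 qC0 hqC0 qC0 hqC0
  obtain ⟨d, u0t, rfl⟩ := List.exists_cons_of_ne_nil hu00
  -- the full step
  have hstep : ∀ g : List Sig, M.runOn M.init g ∈ C →
      ∃ g' : List Sig, M.runOn M.init g' ∈ C ∧ g <+: g' ∧ g.length < g'.length ∧
        (∀ p, g <+: p → p <+: g' → M.runOn M.init p ∈ C') ∧
        (∃ i, g.length < i ∧ i ≤ g'.length ∧ N.runOn N.init (g'.take i) ∈ acc) ∧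
        (∃ i, g.length < i ∧ i ≤ g'.length ∧ M.runOn M.init (g'.take i) = q') := by
    intro g hg
    obtain ⟨g1, hg1pre, hg1len, hg1C, hg1mid, hg1acc⟩ :=
      step_lemma M c N acc hC hCacc hx g hg g.length
    obtain ⟨w1, hw10, hw11, hw12⟩ := hC'.2 (M.runOn M.init g1) (hsub hg1C) q' hq'C'
    obtain ⟨w2, hw20, hw21, hw22⟩ := hC'.2 q' hq'C' qC0 (hsub hqC0)
    have hq0 : M.runOn q' w2 ∈ C := hw21 ▸ hqC0
    refine ⟨g1 ++ (w1 ++ w2), ?_, hg1pre.trans (List.prefix_append ..), ?_, ?_, ?_, ?_⟩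
    · rw [M.runOn_append, M.runOn_append, hw11, hw21]; exact hqC0
    · simp only [List.length_append]; omega
    · intro p hp1 hp2
      rcases prefix_append_cases hp2 with h | ⟨p', hp', rfl⟩
      · exact hsub (hg1mid p hp1 h)
      · rcases prefix_append_cases hp' with h | ⟨p'', hp'', rfl⟩
        · rw [M.runOn_append]
          exact hw12 p' h
        · rw [M.runOn_append, M.runOn_append, hw11]
          exact hw22 p'' hp''
    · refine ⟨g1.length, hg1len, by simp, ?_⟩
      rw [List.take_left]
      exact hg1acc
    · refine ⟨g1.length + w1.length, by omega, by simp, ?_⟩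
      rw [List.take_append, List.take_of_length_le (by omega),
        List.take_append, List.take_of_length_le (by omega)]
      simp only [Nat.add_sub_cancel_left, Nat.sub_self, List.take_zero, List.append_nil]
      rw [M.runOn_append]
      exact hw11
  -- build the sequence of words
  choose f hfC hfpre hflen hfmid hfacc hfq' using hstep
  obtain ⟨v, hv⟩ := hCreach
  set P : ℕ → {g : List Sig // M.runOn M.init g ∈ C} :=
    fun k => Nat.rec ⟨v, hv⟩ (fun _ p => ⟨f p.1 p.2, hfC p.1 p.2⟩) k with hP
  have hPsucc : ∀ k, (P (k+1)).1 = f (P k).1 (P k).2 := fun k => rfl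
  have hP0 : (P 0).1 = v := rfl
  have hmono : ∀ k m, k ≤ m → (P k).1 <+: (P m).1 := by
    intro k m hkm
    induction m, hkm using Nat.le_induction with
    | base => exact List.prefix_refl _
    | succ m hm ih => exact ih.trans (hPsucc m ▸ hfpre (P m).1 (P m).2)
  have hlen : ∀ k, k ≤ (P k).1.length := by
    intro k
    induction k with
    | zero => exact Nat.zero_le _
    | succ k ih =>
      have := hflen (P k).1 (P k).2
      rw [← hPsucc k] at this
      omega
  set x : ℕ → Sig := fun n => ((P (n+1)).1).getD n d with hxdef
  have hxseg : ∀ k n, n ≤ (P k).1.length → DetAuto.seg x 0 n = ((P k).1).take n := by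
    intro k n hn
    apply List.ext_getElem
    · simp [hn]
    · intro i h1 h2
      simp only [DetAuto.seg_length] at h1
      have hi1 : i < (P (i+1)).1.length := lt_of_lt_of_le (Nat.lt_succ_self i) (hlen (i+1))
      have hxi : x i = (P (i+1)).1[i] := List.getD_eq_getElem _ d hi1
      simp only [DetAuto.seg, List.getElem_ofFn, List.getElem_take]
      rw [Nat.zero_add, hxi]
      have hik : i < (P k).1.length := by omega
      rcases le_total (i+1) k with h | h
      · exact (hmono _ _ h).getElem hi1
      · exact ((hmono _ _ h).getElem hik).symm
  have hMrunx : ∀ k n, n ≤ (P k).1.length → M.run x n = M.runOn M.init (((P k).1).take n) := by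
    intro k n hn
    rw [M.run_eq_runOn, hxseg k n hn]
  have hNrunx : ∀ k n, n ≤ (P k).1.length → N.run x n = N.runOn N.init (((P k).1).take n) := by
    intro k n hn
    rw [N.run_eq_runOn, hxseg k n hn]
  -- x is accepted by the Büchi automaton
  have hfreqacc : ∃ᶠ n in atTop, N.run x n ∈ acc := by
    rw [frequently_atTop]
    intro a
    obtain ⟨i, hi1, hi2, hi3⟩ := hfacc (P a).1 (P a).2
    rw [← hPsucc a] at hi2 hi3
    refine ⟨i, by have := hlen a; omega, ?_⟩
    rw [hNrunx (a+1) i hi2]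
    exact hi3
  have hxL : x ∈ L := (hN x).mpr hfreqacc
  -- q' is visited infinitely often
  have hq'freq : ∃ᶠ n in atTop, M.run x n = q' := by
    rw [frequently_atTop]
    intro a
    obtain ⟨i, hi1, hi2, hi3⟩ := hfq' (P a).1 (P a).2
    rw [← hPsucc a] at hi2 hi3
    refine ⟨i, by have := hlen a; omega, ?_⟩
    rw [hMrunx (a+1) i hi2]
    exact hi3
  -- the run is eventually inside C'
  have hgmid : ∀ k p, v <+: p → p <+: (P k).1 → M.runOn M.init p ∈ C' := by
    intro k
    induction k with
    | zero =>
      intro p hp1 hp2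
      have : p = v := by
        rw [List.prefix_iff_eq_take.mp hp2, hP0,
          List.take_of_length_le (by simpa [hP0] using hp1.length_le)]
      rw [this]
      exact hsub hv
    | succ k ih =>
      intro p hp1 hp2
      rcases le_or_gt p.length (P k).1.length with h | h
      · exact ih p hp1 (List.prefix_of_prefix_length_le hp2
          ((hfpre (P k).1 (P k).2).trans (hPsucc k ▸ List.prefix_refl _)) h)
      · have hPk : (P k).1 <+: p :=
          List.prefix_of_prefix_length_le
            ((hfpre (P k).1 (P k).2).trans (hPsucc k ▸ List.prefix_refl _)) hp2 (le_of_lt h)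
        have := hfmid (P k).1 (P k).2 p hPk (hPsucc k ▸ hp2)
        exact this
  have hC'ev : ∀ n, v.length ≤ n → M.run x n ∈ C' := by
    intro n hn
    rw [hMrunx n n (hlen n)]
    refine hgmid n _ ?_ (List.take_prefix ..)
    rw [List.prefix_take_iff]
    exact ⟨hP0 ▸ hmono 0 n (Nat.zero_le n), hn⟩
  -- contradiction with parity acceptance
  obtain ⟨m, hmodd, hmfreq, hmmax⟩ := (hL x).mp hxL
  have h1 : c q' ≤ m := hmmax _ (hq'freq.mono fun n hn => by rw [hn])
  have h2 : m ≤ c q' := by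
    obtain ⟨q1, hq1inf, hq1c⟩ := freq_color_mem_infSet M c hmfreq
    obtain ⟨n, hn1, hn2⟩ := frequently_atTop.mp hq1inf v.length
    have : q1 ∈ C' := hn2 ▸ hC'ev n hn1
    exact hq1c ▸ hq'max q1 this
  exact heven (by rw [le_antisymm h1 h2]; exact hmodd)

end Dir1

/-- The language of a DPW is DBW-recognizable iff every SCS `C'` containing a reachable
accepting SCS `C` is itself accepting. -/
theorem stmt_19 {Sig : Type} [Fintype Sig] (M : DetAuto Sig) (c : M.Q → ℕ)
    (L : Set (ℕ → Sig)) (hL : ∀ x, x ∈ L ↔ ParityAccept M c x) :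
    DBWRecognizable L ↔
      ∀ C : Set M.Q, IsSCS M C → (∃ v : List Sig, M.runOn M.init v ∈ C) →
        AcceptingSCS M c C →
        ∀ C' : Set M.Q, IsSCS M C' → C ⊆ C' → AcceptingSCS M c C' := by
  constructor
  · exact dir1 M c L hL
  · exact dir2 M c L hL
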